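/- For n ≥ 2, with h = (s_{n-1}-1)(2s_{n-1}-3), a_i = h/s_{n-i} for 2 ≤ i ≤ n, and a_0 = s_{n-1}-2, one has a_2 + a_3 + ... + a_n = (2s_{n-1} - 3) · a_0; i.e., the sum of the weights h/s_0, ..., h/s_{n-2} is a multiple of s_{n-1} - 2. -/
import Mathlib


def sylvester : ℕ → ℕ
  | 0 => 2
  | n + 1 => sylvester n * (sylvester n - 1) + 1

lemma sylvester_two_le (n : ℕ) : 2 ≤ sylvester n := by
  induction n with
  | zero => simp [sylvester]
  | succ m ih =>
    simp only [sylvester]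
    obtain ⟨t, ht⟩ : ∃ t, sylvester m = t + 2 := ⟨sylvester m - 2, by omega⟩
    rw [ht]
    have : (t + 2) * (t + 2 - 1) = (t + 2) * (t + 1) := by rfl
    nlinarith

lemma sylvester_pos (n : ℕ) : 1 ≤ sylvester n := le_trans (by norm_num) (sylvester_two_le n)

lemma sylvester_dvd_sub_one {k m : ℕ} (h : k < m) : sylvester k ∣ sylvester m - 1 := by
  induction m with
  | zero => omega
  | succ m ih =>
    have : sylvester (m + 1) - 1 = sylvester m * (sylvester m - 1) := by
      simp [sylvester]
    rw [this]
    rcases Nat.lt_succ_iff_lt_or_eq.mp h with h' | h'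
    · exact Dvd.dvd.mul_left (ih h') _
    · subst h'; exact Dvd.intro _ rfl

lemma sylvester_sum (m : ℕ) :
    ∑ k ∈ Finset.range m, (sylvester m - 1) / sylvester k = sylvester m - 2 := by
  induction m with
  | zero => simp [sylvester]
  | succ m ih =>
    have hs1 : sylvester (m + 1) - 1 = sylvester m * (sylvester m - 1) := by
      simp [sylvester]
    rw [Finset.sum_range_succ]
    have hterm : ∀ k ∈ Finset.range m,
        (sylvester (m + 1) - 1) / sylvester k = sylvester m * ((sylvester m - 1) / sylvester k) := by
      intro k hk
      rw [hs1, Nat.mul_div_assoc _ (sylvester_dvd_sub_one (Finset.mem_range.mp hk))]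
    rw [Finset.sum_congr rfl hterm, ← Finset.mul_sum, ih]
    have hlast : (sylvester (m + 1) - 1) / sylvester m = sylvester m - 1 := by
      rw [hs1, Nat.mul_div_cancel_left _ (sylvester_pos m)]
    rw [hlast]
    have h1 := sylvester_pos m
    have : sylvester (m + 1) = sylvester m * (sylvester m - 1) + 1 := rfl
    rw [this]
    obtain ⟨t, ht⟩ : ∃ t, sylvester m = t + 2 :=
      ⟨sylvester m - 2, by have := sylvester_two_le m; omega⟩
    rw [ht]
    have e1 : t + 2 - 2 = t := by omega
    have e2 : t + 2 - 1 = t + 1 := by omega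
    rw [e1, e2]
    have : (t + 2) * (t + 1) + 1 = ((t + 2) * t + (t + 1)) + 2 := by ring
    omega

theorem canonical_weights_a0_multiple (n : ℕ) (hn : 2 ≤ n) :
    ∑ i ∈ Finset.Icc 2 n,
        (sylvester (n - 1) - 1) * (2 * sylvester (n - 1) - 3) / sylvester (n - i)
      = (2 * sylvester (n - 1) - 3) * (sylvester (n - 1) - 2) := by
  have key : ∑ i ∈ Finset.Icc 2 n,
      (sylvester (n - 1) - 1) * (2 * sylvester (n - 1) - 3) / sylvester (n - i)
      = ∑ k ∈ Finset.range (n - 1),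
        (2 * sylvester (n - 1) - 3) * ((sylvester (n - 1) - 1) / sylvester k) := by
    apply Finset.sum_nbij' (fun i => n - i) (fun k => n - k)
    · intro i hi
      simp only [Finset.mem_Icc] at hi
      simp only [Finset.mem_range]
      omega
    · intro k hk
      simp only [Finset.mem_range] at hk
      simp only [Finset.mem_Icc]
      omega
    · intro i hi
      simp only [Finset.mem_Icc] at hi
      omega
    · intro k hk
      simp only [Finset.mem_range] at hk
      omega
    · intro i hi
      simp only [Finset.mem_Icc] at hi
      have hdvd : sylvester (n - i) ∣ sylvester (n - 1) - 1 :=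
        sylvester_dvd_sub_one (by omega)
      rw [mul_comm (sylvester (n - 1) - 1), Nat.mul_div_assoc _ hdvd]
  rw [key, ← Finset.mul_sum, sylvester_sum (n - 1)]
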